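/- Let b_0 = 1 and let b_1,…,b_d be nonzero real numbers with b_d > 0, and set a_k = b_k/|b_{k−1}| for 1 ≤ k ≤ d. Then g_d(b_1,…,b_d) = f_d(b_1, b_2/b_1, …, b_d/b_{d−1}) = sign(∏_{i=1}^{d} b_i) · Σ_{s_1=1}^{ā_1} Σ_{s_2=1}^{ \overline{a_2 s_1} } ⋯ Σ_{s_d=1}^{ \overline{a_d s_{d−1}} } 1, where each index s_i runs over positive integers, and for positive s the bar is interpreted by \overline{a s} = a s if a > 0 and \overline{a s} = −a s − 1 if a < 0. -/

import Mathlib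

open MeasureTheory Polynomial

noncomputable section

/-- The lattice points of `ℝ^d`: points all of whose coordinates are integers. -/
def latticePts (d : ℕ) : Set (Fin d → ℝ) := {x | ∀ i, ∃ n : ℤ, x i = (n : ℝ)}

/-- The projection `π^{(d-k)} : ℝ^d → ℝ^k` forgetting the last `d - k` coordinates
(for `k ≤ d`; junk value `0` in out-of-range coordinates otherwise). -/
def projTo (d k : ℕ) (x : Fin d → ℝ) : Fin k → ℝ :=
  fun i => if h : (i : ℕ) < d then x ⟨(i : ℕ), h⟩ else 0

/-- A polytope with vertex set `V ⊆ ℝ^d` is a lattice-face polytope if for every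
`0 ≤ k ≤ d-1` and every `(k+1)`-subset `U ⊆ V`, `π^{(d-k)}(aff(U) ∩ ℤ^d) = ℤ^k`. -/
def IsLatticeFace (d : ℕ) (V : Finset (Fin d → ℝ)) : Prop :=
  ∀ k : ℕ, k < d → ∀ U : Finset (Fin d → ℝ), U ⊆ V → U.card = k + 1 →
    projTo d k '' ((affineSpan ℝ (U : Set (Fin d → ℝ)) : Set (Fin d → ℝ)) ∩ latticePts d)
      = latticePts k

/-- The last coordinate of a point of `ℝ^d`. -/
def lastCoord (d : ℕ) (x : Fin d → ℝ) : ℝ :=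
  if h : 0 < d then x ⟨d - 1, by omega⟩ else 0

/-- The negative boundary `NB(P)`: points of `P` minimizing the last coordinate in
their fiber over `π(P)`. -/
def NB (d : ℕ) (P : Set (Fin d → ℝ)) : Set (Fin d → ℝ) :=
  {x | x ∈ P ∧ ∀ y ∈ P, projTo d (d - 1) y = projTo d (d - 1) x → lastCoord d x ≤ lastCoord d y}

/-- The positive boundary `PB(P)`: points of `P` maximizing the last coordinate in
their fiber over `π(P)`. -/
def PB (d : ℕ) (P : Set (Fin d → ℝ)) : Set (Fin d → ℝ) :=
  {x | x ∈ P ∧ ∀ y ∈ P, projTo d (d - 1) y = projTo d (d - 1) x → lastCoord d y ≤ lastCoord d x}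

/-- `i(P,m)`: the number of lattice points in the dilate `mP`. -/
def ehr (d : ℕ) (P : Set (Fin d → ℝ)) (m : ℕ) : ℕ :=
  (latticePts d ∩ (fun x => (m : ℝ) • x) '' P).ncard

/-- `î(P,m)`: the number of lattice points in the interior of the dilate `mP`. -/
def intEhr (d : ℕ) (P : Set (Fin d → ℝ)) (m : ℕ) : ℕ :=
  (latticePts d ∩ interior ((fun x => (m : ℝ) • x) '' P)).ncard

/-- The `j`-th coordinate (`0`-indexed) of a point of `ℝ^d`, junk value `0` if `j ≥ d`. -/
def coordN {d : ℕ} (w : Fin d → ℝ) (j : ℕ) : ℝ := if h : j < d then w ⟨j, h⟩ else 0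

/-- The vertex occurring in row `p` (0-indexed) of the matrices `X(σ,k)`, `Y(σ,k)`:
vertex `v_{σ(p+1)}` for `p < k`, and `v_{d+1}` for the last row of `X(σ,k)`. -/
def rowVert (d : ℕ) (v : Fin (d + 1) → Fin d → ℝ) (σ : Equiv.Perm (Fin d)) (k p : ℕ) :
    Fin d → ℝ :=
  if h : p < k ∧ p < d then v (Fin.castSucc (σ ⟨p, h.2⟩)) else v (Fin.last d)

/-- The matrix `X(σ,k)` with rows `(1, x_{σ(i),1},…,x_{σ(i),k})` for `1 ≤ i ≤ k`
followed by `(1, x_{d+1,1},…,x_{d+1,k})`. -/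
def Xmat (d : ℕ) (v : Fin (d + 1) → Fin d → ℝ) (σ : Equiv.Perm (Fin d)) (k : ℕ) :
    Matrix (Fin (k + 1)) (Fin (k + 1)) ℝ :=
  Matrix.of fun p q =>
    if (q : ℕ) = 0 then 1 else coordN (rowVert d v σ k (p : ℕ)) ((q : ℕ) - 1)

/-- The matrix `Y(σ,k)` with rows `(1, x_{σ(i),1},…,x_{σ(i),k-1})` for `1 ≤ i ≤ k`. -/
def Ymat (d : ℕ) (v : Fin (d + 1) → Fin d → ℝ) (σ : Equiv.Perm (Fin d)) (k : ℕ) :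
    Matrix (Fin k) (Fin k) ℝ :=
  Matrix.of fun p q =>
    if (q : ℕ) = 0 then 1 else coordN (rowVert d v σ k (p : ℕ)) ((q : ℕ) - 1)

/-- The matrix `X̃(σ,k;x)`: `X(σ,k)` with its last row replaced by `(1, x_1,…,x_k)`. -/
def Xtil (d : ℕ) (v : Fin (d + 1) → Fin d → ℝ) (σ : Equiv.Perm (Fin d)) (k : ℕ)
    (x : Fin d → ℝ) : Matrix (Fin (k + 1)) (Fin (k + 1)) ℝ :=
  Matrix.of fun p q =>
    if (q : ℕ) = 0 then 1
    else if (p : ℕ) < k then coordN (rowVert d v σ k (p : ℕ)) ((q : ℕ) - 1)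
    else coordN x ((q : ℕ) - 1)

/-- `z(σ,k) = det X(σ,k) / det Y(σ,k)`; note `z(σ,0) = 1`. -/
def zc (d : ℕ) (v : Fin (d + 1) → Fin d → ℝ) (σ : Equiv.Perm (Fin d)) (k : ℕ) : ℝ :=
  (Xmat d v σ k).det / (Ymat d v σ k).det

/-- The minor `m(σ,k;j)` of `X̃(σ,k;x)` obtained by deleting the last row and the
`(j+1)`-st column (it does not depend on `x`). -/
def minorM (d : ℕ) (v : Fin (d + 1) → Fin d → ℝ) (σ : Equiv.Perm (Fin d)) (k j : ℕ) : ℝ :=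
  (Matrix.of fun p q : Fin k =>
    Xmat d v σ k (Fin.castSucc p) (if (q : ℕ) < j + 1 then Fin.castSucc q else q.succ)).det

/-- A `d`-simplex with vertices `v_1, …, v_{d+1}` is in general position if its vertices
are affinely independent and for every `0 ≤ k ≤ d-1` and every `(k+1)`-subset `U` of the
vertex set, `π^{(d-k)}(conv U)` is a `k`-simplex. -/
def SimplexGenPos (d : ℕ) (v : Fin (d + 1) → Fin d → ℝ) : Prop :=
  AffineIndependent ℝ v ∧
    ∀ k : ℕ, k < d → ∀ U : Finset (Fin (d + 1)), U.card = k + 1 →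
      affineSpan ℝ (projTo d k '' (v '' (U : Set (Fin (d + 1))))) = ⊤

/-- A lattice-face `d`-simplex, given by its `d+1` affinely independent vertices. -/
def SimplexLatticeFace (d : ℕ) (v : Fin (d + 1) → Fin d → ℝ) : Prop :=
  AffineIndependent ℝ v ∧
    ∀ k : ℕ, k < d → ∀ U : Finset (Fin (d + 1)), U.card = k + 1 →
      projTo d k ''
          ((affineSpan ℝ (v '' (U : Set (Fin (d + 1)))) : Set (Fin d → ℝ)) ∩ latticePts d)
        = latticePts k

open scoped Classical in
/-- The sign of a facet `F` of `P`: `+1` if `F` has a relative-interior point on the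
positive boundary, `-1` if on the negative boundary, `0` otherwise. -/
def facetSign (d : ℕ) (P F : Set (Fin d → ℝ)) : ℝ :=
  if ∃ x ∈ intrinsicInterior ℝ F, x ∈ PB d P then 1
  else if ∃ x ∈ intrinsicInterior ℝ F, x ∈ NB d P then -1
  else 0

/-- The Bernoulli polynomial `B_n(x)`, as a real polynomial. -/
def bernR (n : ℕ) : Polynomial ℝ := (Polynomial.bernoulli n).map (algebraMap ℚ ℝ)

/-- The `k`-th power sum polynomial `P_k(x) = (B_{k+1}(x+1) - B_{k+1}(0))/(k+1)`. -/
def PkR (k : ℕ) : Polynomial ℝ :=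
  Polynomial.C (((k : ℝ) + 1)⁻¹) *
    ((bernR (k + 1)).comp (Polynomial.X + 1) - Polynomial.C ((bernR (k + 1)).eval 0))

/-- The extension of the summation operation: for a polynomial `h(s) = Σ_k h_k s^k`,
`Σ_{s=1}^{u} h := h_0 u + Σ_{k ≥ 1} h_k P_k(u)`, as a polynomial in the upper bound `u`. -/
def extSumPoly (h : Polynomial ℝ) : Polynomial ℝ :=
  Polynomial.C (h.coeff 0) * Polynomial.X +
    ∑ k ∈ Finset.Icc 1 h.natDegree, Polynomial.C (h.coeff k) * PkR k

/-- `fdPoly n a` is the polynomial (in the first variable `a_1`) expressing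
`f_{n+1}(a_1, a 0, a 1, …)`, defined recursively by `f_1(a_1) = a_1` and
`f_d(a_1,…,a_d) = Σ_{s=1}^{a_1} f_{d-1}(a_2 s, a_3, …, a_d)` using the extended sum. -/
def fdPoly : ℕ → (ℕ → ℝ) → Polynomial ℝ
  | 0, _ => Polynomial.X
  | n + 1, a =>
      extSumPoly ((fdPoly n (fun i => a (i + 1))).comp (Polynomial.C (a 0) * Polynomial.X))

/-- `f_d(a_1, …, a_d)` where `a_k = a (k-1)` (0-indexed). -/
def fd (d : ℕ) (a : ℕ → ℝ) : ℝ := (fdPoly (d - 1) (fun i => a (i + 1))).eval (a 0)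

/-- `g_d(b_1, …, b_d) = f_d(b_1/b_0, b_2/b_1, …, b_d/b_{d-1})` where `b_k = b k` and
`b 0 = 1` by convention. -/
def gd (d : ℕ) (b : ℕ → ℝ) : ℝ := fd d (fun i => b (i + 1) / b i)

/-- `x̄` for an integer: `x̄ = x` if `x ≥ 0` and `x̄ = -x-1` if `x < 0`. -/
def barNat (n : ℤ) : ℕ := if 0 ≤ n then n.toNat else (-n - 1).toNat

/-- The half-open segment `Ω(conv(0,x))`: `(0,x]` if `x ≥ 0` and `(x,0]` if `x < 0`. -/
def hoSeg (x : ℝ) : Set ℝ := if 0 ≤ x then Set.Ioc 0 x else Set.Ioc x 0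

/-- The previous coordinate `s_{k-1}` of a point `s ∈ ℝ^d`, with `s_0 = 1`. -/
def sPrev (d : ℕ) (s : Fin d → ℝ) (k : Fin d) : ℝ :=
  if (k : ℕ) = 0 then 1 else s ⟨(k : ℕ) - 1, lt_of_le_of_lt (Nat.sub_le _ _) k.isLt⟩

/-- The nested sum `Σ_{s_1=1}^{⌊a_1 sp⌋¯} Σ_{s_2=1}^{⌊a_2 s_1⌋¯} ⋯ 1` over positive
integers. -/
def nestedCount : ℕ → (ℕ → ℝ) → ℕ → ℕ
  | 0, _, _ => 1
  | n + 1, a, sp =>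
      ∑ s ∈ Finset.Icc 1 (barNat ⌊a 0 * (sp : ℝ)⌋), nestedCount n (fun i => a (i + 1)) s

/-- The nested extended sum `Σ_{s_1=1}^{\bar{a_1 s_0}} ⋯ Σ_{s_d=1}^{\bar{a_d s_{d-1}}} 1`,
as a polynomial in `s_0`, where for positive `s` the bar is `a s` if `a > 0` and
`-a s - 1` if `a < 0`. -/
def barNested : ℕ → (ℕ → ℝ) → Polynomial ℝ
  | 0, _ => 1
  | n + 1, a =>
      (extSumPoly (barNested n (fun i => a (i + 1)))).comp
        (if 0 < a 0 then Polynomial.C (a 0) * Polynomial.X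
         else -(Polynomial.C (a 0) * Polynomial.X) - 1)

/-- Row vertex for the hat matrices: `v_{σ(p+1)}` for `p < d`. -/
def rowVert' (d : ℕ) (v : Fin (d + 1) → Fin d → ℝ) (σ : Equiv.Perm (Fin d)) (p : ℕ) :
    Fin d → ℝ :=
  if h : p < d then v (Fin.castSucc (σ ⟨p, h⟩)) else v (Fin.last d)

/-- The matrix `X̂(σ,k)` with entries `x̂_{σ(p),q} = x_{σ(p),q} - x_{d+1,q}`. -/
def XhatM (d : ℕ) (v : Fin (d + 1) → Fin d → ℝ) (σ : Equiv.Perm (Fin d)) (k : ℕ) :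
    Matrix (Fin k) (Fin k) ℝ :=
  Matrix.of fun p q =>
    coordN (rowVert' d v σ (p : ℕ)) (q : ℕ) - coordN (v (Fin.last d)) (q : ℕ)

/-- The matrix `Ŷ(σ,k)` with rows `(1, x̂_{σ(p),1},…,x̂_{σ(p),k-1})`. -/
def YhatM (d : ℕ) (v : Fin (d + 1) → Fin d → ℝ) (σ : Equiv.Perm (Fin d)) (k : ℕ) :
    Matrix (Fin k) (Fin k) ℝ :=
  Matrix.of fun p q =>
    if (q : ℕ) = 0 then 1
    else coordN (rowVert' d v σ (p : ℕ)) ((q : ℕ) - 1) - coordN (v (Fin.last d)) ((q : ℕ) - 1)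

/-- `ẑ(σ,k) = det X̂(σ,k) / det Ŷ(σ,k)`. -/
def zhat (d : ℕ) (v : Fin (d + 1) → Fin d → ℝ) (σ : Equiv.Perm (Fin d)) (k : ℕ) : ℝ :=
  (XhatM d v σ k).det / (YhatM d v σ k).det

end


noncomputable section Aux
open Polynomial

/-- helper polynomial family: `Qpoly 0 = X`, `Qpoly (k+1) = PkR (k+1)`. -/
def Qpoly : ℕ → Polynomial ℝ
  | 0 => Polynomial.X
  | (k+1) => PkR (k+1)

lemma real_sign_mul' (x y : ℝ) (hx : x ≠ 0) (hy : y ≠ 0) :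
    Real.sign (x * y) = Real.sign x * Real.sign y := by
  rcases hx.lt_or_gt with h | h <;> rcases hy.lt_or_gt with h' | h'
  · rw [Real.sign_of_pos (mul_pos_of_neg_of_neg h h'), Real.sign_of_neg h, Real.sign_of_neg h']
    ring
  · rw [Real.sign_of_neg (mul_neg_of_neg_of_pos h h'), Real.sign_of_neg h, Real.sign_of_pos h']
    ring
  · rw [Real.sign_of_neg (mul_neg_of_pos_of_neg h h'), Real.sign_of_pos h, Real.sign_of_neg h']
    ring
  · rw [Real.sign_of_pos (mul_pos h h'), Real.sign_of_pos h, Real.sign_of_pos h']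
    ring

lemma sign_prod_Icc (m : ℕ) (b : ℕ → ℝ) (h : ∀ i, 1 ≤ i → i ≤ m → b i ≠ 0) :
    Real.sign (∏ i ∈ Finset.Icc 1 m, b i) = ∏ i ∈ Finset.range m, Real.sign (b (i+1)) := by
  induction m with
  | zero => simp [Real.sign_one]
  | succ m ih =>
    have hne : ∏ i ∈ Finset.Icc 1 m, b i ≠ 0 :=
      Finset.prod_ne_zero_iff.mpr fun i hi => by
        rw [Finset.mem_Icc] at hi; exact h i hi.1 (by omega)
    rw [Finset.prod_Icc_succ_top (by omega), Finset.prod_range_succ,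
      real_sign_mul' _ _ hne (h (m+1) (by omega) le_rfl),
      ih (fun i h1 h2 => h i h1 (by omega))]

lemma bernoulliQ_comp_X_add_one (n : ℕ) :
    (Polynomial.bernoulli n).comp (Polynomial.X + 1) =
      Polynomial.bernoulli n + Polynomial.C (n : ℚ) * Polynomial.X ^ (n - 1) := by
  apply Polynomial.funext
  intro x
  rw [Polynomial.eval_comp]
  simp only [Polynomial.eval_add, Polynomial.eval_X, Polynomial.eval_one, Polynomial.eval_mul,
    Polynomial.eval_C, Polynomial.eval_pow]
  rw [add_comm x 1, Polynomial.bernoulli_eval_one_add]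

lemma bernR_comp_X_add_one (n : ℕ) :
    (bernR n).comp (X + 1) = bernR n + C (n : ℝ) * X ^ (n - 1) := by
  have h := congrArg (Polynomial.map (algebraMap ℚ ℝ)) (bernoulliQ_comp_X_add_one n)
  rw [Polynomial.map_comp] at h
  simpa [bernR] using h

lemma bernR_eval_one_eq (n : ℕ) (hn : n ≠ 1) : (bernR n).eval 1 = (bernR n).eval 0 := by
  have h1 : (bernR n).eval 1 = (algebraMap ℚ ℝ) ((Polynomial.bernoulli n).eval 1) := by
    rw [bernR, Polynomial.eval_one_map]
  have h0 : (bernR n).eval 0 = (algebraMap ℚ ℝ) ((Polynomial.bernoulli n).eval 0) := by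
    rw [bernR, Polynomial.eval_zero_map]
  rw [h1, h0, Polynomial.bernoulli_eval_one, Polynomial.bernoulli_eval_zero,
    ← bernoulli_eq_bernoulli'_of_ne_one hn]

lemma Qpoly_delta (k : ℕ) : Qpoly k - (Qpoly k).comp (X - 1) = X ^ k := by
  cases k with
  | zero => simp [Qpoly]
  | succ k =>
    show PkR (k+1) - (PkR (k+1)).comp (X - 1) = X ^ (k+1)
    rw [PkR]
    have e0 : ((X + 1 : ℝ[X])).comp (X - 1) = X := by
      simp [Polynomial.add_comp]
    have e1 : ((bernR (k+1+1)).comp (X + 1)).comp (X - 1) = bernR (k+1+1) := by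
      rw [Polynomial.comp_assoc, e0, Polynomial.comp_X]
    rw [Polynomial.mul_comp, Polynomial.C_comp, Polynomial.sub_comp, Polynomial.C_comp, e1]
    rw [bernR_comp_X_add_one (k+1+1), show (k+1+1) - 1 = k + 1 from rfl]
    have h1 : (C ((((k+1:ℕ):ℝ) + 1)⁻¹) * C (((k+1+1:ℕ):ℝ)) : ℝ[X]) = 1 := by
      rw [← Polynomial.C_mul]
      rw [show ((((k+1:ℕ):ℝ) + 1)⁻¹ * (((k+1+1:ℕ):ℝ)) : ℝ) = 1 by
        push_cast
        rw [inv_mul_cancel₀ (by positivity)]]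
      exact Polynomial.C_1
    linear_combination (X:ℝ[X]) ^ (k+1) * h1

lemma Qpoly_eval_zero (k : ℕ) : (Qpoly k).eval 0 = 0 := by
  cases k with
  | zero => simp [Qpoly]
  | succ k =>
    show (PkR (k+1)).eval 0 = 0
    rw [PkR]
    simp only [Polynomial.eval_mul, Polynomial.eval_C, Polynomial.eval_sub, Polynomial.eval_comp,
      Polynomial.eval_add, Polynomial.eval_X, Polynomial.eval_one, zero_add]
    rw [bernR_eval_one_eq (k+1+1) (by omega)]
    ring

lemma extSumPoly_eq_sum (h : Polynomial ℝ) {N : ℕ} (hN : h.natDegree < N) :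
    extSumPoly h = ∑ k ∈ Finset.range N, C (h.coeff k) * Qpoly k := by
  have h0 : (0:ℕ) < N := Nat.lt_of_le_of_lt (Nat.zero_le _) hN
  rw [Finset.range_eq_Ico, Finset.sum_eq_sum_Ico_succ_bot h0, extSumPoly]
  have e1 : ∑ k ∈ Finset.Icc 1 h.natDegree, C (h.coeff k) * PkR k
      = ∑ k ∈ Finset.Icc 1 h.natDegree, C (h.coeff k) * Qpoly k :=
    Finset.sum_congr rfl (fun k hk => by
      obtain ⟨m, rfl⟩ : ∃ m, k = m + 1 :=
        ⟨k - 1, by have := (Finset.mem_Icc.mp hk).1; omega⟩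
      rfl)
  rw [e1]
  congr 1
  apply Finset.sum_subset
  · intro k hk
    simp only [Finset.mem_Icc] at hk
    simp only [Finset.mem_Ico]
    omega
  · intro k hk hk2
    simp only [Finset.mem_Ico] at hk
    simp only [Finset.mem_Icc, not_and, not_le] at hk2
    rw [Polynomial.coeff_eq_zero_of_natDegree_lt (hk2 hk.1), Polynomial.C_0, zero_mul]

lemma extSumPoly_C_mul (c : ℝ) (h : Polynomial ℝ) :
    extSumPoly (C c * h) = C c * extSumPoly h := by
  rcases eq_or_ne c 0 with rfl | hc
  · simp [extSumPoly]
  · have hd : (C c * h).natDegree < h.natDegree + 1 := by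
      rw [Polynomial.natDegree_C_mul hc]
      omega
    rw [extSumPoly_eq_sum (C c * h) hd, extSumPoly_eq_sum h (Nat.lt_succ_self _), Finset.mul_sum]
    exact Finset.sum_congr rfl fun k _ => by
      rw [Polynomial.coeff_C_mul, Polynomial.C_mul, mul_assoc]

lemma extSumPoly_delta (h : Polynomial ℝ) :
    extSumPoly h - (extSumPoly h).comp (X - 1) = h := by
  have e : ∑ k ∈ Finset.range (h.natDegree + 1),
        (C (h.coeff k) * Qpoly k - (C (h.coeff k) * Qpoly k).comp (X - 1))
      = ∑ k ∈ Finset.range (h.natDegree + 1), C (h.coeff k) * X ^ k :=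
    Finset.sum_congr rfl fun k _ => by
      rw [Polynomial.mul_comp, Polynomial.C_comp, ← mul_sub, Qpoly_delta k]
  rw [extSumPoly_eq_sum h (Nat.lt_succ_self _), Polynomial.sum_comp, ← Finset.sum_sub_distrib, e]
  exact (h.as_sum_range_C_mul_X_pow).symm

lemma extSumPoly_eval_zero (h : Polynomial ℝ) : (extSumPoly h).eval 0 = 0 := by
  rw [extSumPoly_eq_sum h (Nat.lt_succ_self _)]
  rw [Polynomial.eval_finset_sum]
  apply Finset.sum_eq_zero
  intro k _
  rw [Polynomial.eval_mul, Qpoly_eval_zero, mul_zero]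

lemma extSumPoly_eval_neg_one (h : Polynomial ℝ) :
    (extSumPoly h).eval (-1) = - h.eval 0 := by
  have hc := congrArg (Polynomial.eval (0:ℝ)) (extSumPoly_delta h)
  simp only [Polynomial.eval_sub, Polynomial.eval_comp, Polynomial.eval_X, Polynomial.eval_one,
    extSumPoly_eval_zero, zero_sub] at hc
  linarith

lemma eq_C_of_comp_X_sub_one {T : Polynomial ℝ} (hT : T.comp (X - 1) = T) :
    T = C (T.eval 0) := by
  have hv : ∀ x : ℝ, T.eval (x - 1) = T.eval x := fun x => by
    conv_rhs => rw [← hT]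
    rw [Polynomial.eval_comp]
    simp
  have hn : ∀ n : ℕ, T.eval (n : ℝ) = T.eval 0 := by
    intro n
    induction n with
    | zero => norm_num
    | succ n ih =>
      have hv1 := hv ((n:ℝ)+1)
      push_cast
      rw [← ih, ← hv1]
      norm_num
  have hz : T - C (T.eval 0) = 0 := by
    apply Polynomial.eq_zero_of_infinite_isRoot
    apply Set.Infinite.mono (s := Set.range (Nat.cast : ℕ → ℝ))
    · rintro x ⟨n, rfl⟩
      simp only [Set.mem_setOf_eq, Polynomial.IsRoot, Polynomial.eval_sub, Polynomial.eval_C,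
        hn n, sub_self]
    · exact Set.infinite_range_of_injective Nat.cast_injective
  have := sub_eq_zero.mp hz
  exact this

lemma extSumPoly_comp_neg (h : Polynomial ℝ) :
    extSumPoly (h.comp (-X)) = -(extSumPoly h).comp (-X - 1) - C (h.eval 0) := by
  have hdel : extSumPoly h - (extSumPoly h).comp (X - 1) = h := extSumPoly_delta h
  have hdel1 : extSumPoly (h.comp (-X)) - (extSumPoly (h.comp (-X))).comp (X - 1)
      = h.comp (-X) := extSumPoly_delta _
  have hcomp : (extSumPoly h).comp (-X) - (extSumPoly h).comp (-X - 1) = h.comp (-X) := by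
    have e := congrArg (fun p => Polynomial.comp p (-X)) hdel
    simp only [Polynomial.sub_comp] at e
    rw [Polynomial.comp_assoc] at e
    have e1 : ((X - 1 : Polynomial ℝ)).comp (-X) = -X - 1 := by
      simp [Polynomial.sub_comp]
    rw [e1] at e
    exact e
  have hTc : (extSumPoly (h.comp (-X))
        - (-(extSumPoly h).comp (-X - 1) - C (h.eval 0))).comp (X - 1)
      = extSumPoly (h.comp (-X)) - (-(extSumPoly h).comp (-X - 1) - C (h.eval 0)) := by
    have e2 : ((-X - 1 : Polynomial ℝ)).comp (X - 1) = -X := by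
      simp only [Polynomial.sub_comp, Polynomial.neg_comp, Polynomial.X_comp,
        Polynomial.one_comp]
      ring
    rw [Polynomial.sub_comp, Polynomial.sub_comp, Polynomial.neg_comp, Polynomial.C_comp,
      Polynomial.comp_assoc, e2]
    linear_combination hcomp - hdel1
  have hTC := eq_C_of_comp_X_sub_one hTc
  have hT0 : (extSumPoly (h.comp (-X))
      - (-(extSumPoly h).comp (-X - 1) - C (h.eval 0))).eval 0 = 0 := by
    simp only [Polynomial.eval_sub, Polynomial.eval_neg, Polynomial.eval_comp,
      Polynomial.eval_C, Polynomial.eval_X, Polynomial.eval_one, neg_zero, zero_sub,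
      extSumPoly_eval_zero]
    rw [extSumPoly_eval_neg_one h]
    ring
  rw [hT0, Polynomial.C_0] at hTC
  linear_combination hTC

lemma barNested_succ (n : ℕ) (a : ℕ → ℝ) :
    barNested (n+1) a = (extSumPoly (barNested n (fun i => a (i+1)))).comp
      (if 0 < a 0 then C (a 0) * X else -(C (a 0) * X) - 1) := rfl

lemma extSumPoly_one : extSumPoly 1 = X := by
  rw [extSumPoly]
  simp

lemma barNested_eval_zero (n : ℕ) : ∀ (a : ℕ → ℝ), 0 < a n →
    (barNested (n+1) a).eval 0 = 0 := by
  induction n with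
  | zero =>
    intro a h
    rw [barNested_succ, show barNested 0 (fun i => a (i+1)) = 1 from rfl, extSumPoly_one,
      Polynomial.X_comp, if_pos h]
    simp
  | succ n ih =>
    intro a h
    rw [barNested_succ, Polynomial.eval_comp]
    by_cases h0 : 0 < a 0
    · rw [if_pos h0]
      simp only [Polynomial.eval_mul, Polynomial.eval_C, Polynomial.eval_X, mul_zero]
      exact extSumPoly_eval_zero _
    · rw [if_neg h0]
      have e : ((-(C (a 0) * X) - 1 : Polynomial ℝ)).eval 0 = -1 := by simp
      rw [e, extSumPoly_eval_neg_one, ih (fun i => a (i+1)) h, neg_zero]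

lemma key_lemma (n : ℕ) : ∀ (b : ℕ → ℝ), (∀ i, i ≤ n + 1 → b i ≠ 0) → 0 < b (n+1) →
    (fdPoly n (fun i => b (i+2) / b (i+1))).comp (C (b 1 / b 0) * X)
      = C (∏ i ∈ Finset.range (n+1), Real.sign (b (i+1))) *
        (barNested (n+1) (fun i => b (i+1) / |b i|)).comp (if 0 < b 0 then X else -X) := by
  induction n with
  | zero =>
    intro b hne hpos
    have hb0 : b 0 ≠ 0 := hne 0 (by norm_num)
    have hpos1 : 0 < b 1 := hpos
    have e1 : barNested 1 (fun i => b (i+1) / |b i|) = C (b 1 / |b 0|) * X := by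
      rw [barNested_succ, show barNested 0 (fun i => (fun j => b (j+1) / |b j|) (i+1)) = 1
        from rfl, extSumPoly_one, Polynomial.X_comp,
        if_pos (div_pos hpos1 (abs_pos.mpr hb0))]
    rw [show fdPoly 0 (fun i => b (i+2)/b (i+1)) = X from rfl, Polynomial.X_comp, e1,
      Finset.prod_range_one, Real.sign_of_pos hpos1, Polynomial.C_1, one_mul]
    rcases hb0.lt_or_gt with h0 | h0
    · rw [if_neg (not_lt.mpr h0.le), abs_of_neg h0, Polynomial.mul_comp, Polynomial.C_comp,
        Polynomial.X_comp, div_neg, Polynomial.C_neg]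
      ring
    · rw [if_pos h0, Polynomial.comp_X, abs_of_pos h0]
  | succ n ih =>
    intro b hne hpos
    have hb0 : b 0 ≠ 0 := hne 0 (by norm_num)
    have hb1 : b 1 ≠ 0 := hne 1 (by omega)
    have hne' : ∀ i, i ≤ n + 1 → b (i+1) ≠ 0 := fun i hi => hne (i+1) (by omega)
    have hpos' : 0 < b (n+2) := hpos
    have hIH : (fdPoly n (fun i => b (i+3) / b (i+2))).comp (C (b 2 / b 1) * X)
        = C (∏ i ∈ Finset.range (n+1), Real.sign (b (i+2))) *
          (barNested (n+1) (fun i => b (i+2) / |b (i+1)|)).comp (if 0 < b 1 then X else -X) :=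
      ih (fun i => b (i+1)) hne' hpos'
    have unfoldL : fdPoly (n+1) (fun i => b (i+2) / b (i+1))
        = extSumPoly ((fdPoly n (fun i => b (i+3) / b (i+2))).comp (C (b 2 / b 1) * X)) := rfl
    have unfoldR : barNested (n+2) (fun i => b (i+1) / |b i|)
        = (extSumPoly (barNested (n+1) (fun i => b (i+2) / |b (i+1)|))).comp
            (if 0 < b 1 / |b 0| then C (b 1 / |b 0|) * X else -(C (b 1 / |b 0|) * X) - 1) :=
      rfl
    set G := barNested (n+1) (fun i => b (i+2) / |b (i+1)|) with hG
    have hprod : (∏ i ∈ Finset.range (n+2), Real.sign (b (i+1)))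
        = (∏ i ∈ Finset.range (n+1), Real.sign (b (i+2))) * Real.sign (b 1) :=
      Finset.prod_range_succ' (fun i => Real.sign (b (i+1))) (n+1)
    rw [unfoldL, unfoldR, hIH, extSumPoly_C_mul, hprod]
    rcases hb1.lt_or_gt with h1 | h1
    · -- b 1 < 0
      rw [if_neg (not_lt.mpr h1.le), Real.sign_of_neg h1]
      have hG0 : G.eval 0 = 0 := by
        rw [hG]
        exact barNested_eval_zero n _ (div_pos hpos' (abs_pos.mpr (hne' n (by omega))))
      rw [extSumPoly_comp_neg, hG0, Polynomial.C_0, sub_zero]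
      have hphi : ¬ (0 < b 1 / |b 0|) :=
        not_lt.mpr (div_nonpos_of_nonpos_of_nonneg h1.le (abs_nonneg _))
      rw [if_neg hphi]
      apply Polynomial.funext
      intro x
      rcases hb0.lt_or_gt with h0 | h0
      · rw [if_neg (not_lt.mpr h0.le)]
        simp only [Polynomial.eval_comp, Polynomial.eval_mul, Polynomial.eval_C,
          Polynomial.eval_X, Polynomial.eval_neg, Polynomial.eval_sub, Polynomial.eval_one]
        rw [abs_of_neg h0]
        have harg : -(b 1 / -b 0 * -x) - 1 = -(b 1 / b 0 * x) - 1 := by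
          rw [div_neg]
          ring
        rw [harg]
        ring
      · rw [if_pos h0]
        simp only [Polynomial.eval_comp, Polynomial.eval_mul, Polynomial.eval_C,
          Polynomial.eval_X, Polynomial.eval_neg, Polynomial.eval_sub, Polynomial.eval_one]
        rw [abs_of_pos h0]
        ring
    · -- 0 < b 1
      rw [if_pos h1, Polynomial.comp_X, Real.sign_of_pos h1]
      have hphi : 0 < b 1 / |b 0| := div_pos h1 (abs_pos.mpr hb0)
      rw [if_pos hphi]
      apply Polynomial.funext
      intro x
      rcases hb0.lt_or_gt with h0 | h0
      · rw [if_neg (not_lt.mpr h0.le)]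
        simp only [Polynomial.eval_comp, Polynomial.eval_mul, Polynomial.eval_C,
          Polynomial.eval_X, Polynomial.eval_neg]
        rw [abs_of_neg h0]
        have harg : b 1 / -b 0 * -x = b 1 / b 0 * x := by
          rw [div_neg]
          ring
        rw [harg]
        ring
      · rw [if_pos h0]
        simp only [Polynomial.eval_comp, Polynomial.eval_mul, Polynomial.eval_C,
          Polynomial.eval_X]
        rw [abs_of_pos h0]
        ring

end Aux

theorem gd_eq_sign_mul_barSum
    (d : ℕ) (hd : 1 ≤ d) (b : ℕ → ℝ) (hb0 : b 0 = 1)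
    (hbne : ∀ k, 1 ≤ k → k ≤ d → b k ≠ 0) (hbd : 0 < b d) :
    gd d b = fd d (fun i => b (i + 1) / b i)
      ∧ gd d b = Real.sign (∏ i ∈ Finset.Icc 1 d, b i)
          * (barNested d (fun i => b (i + 1) / |b i|)).eval 1 := by
  constructor
  · rfl
  · obtain ⟨n, rfl⟩ : ∃ n, d = n + 1 := ⟨d - 1, by omega⟩
    have hb0pos : (0:ℝ) < b 0 := by rw [hb0]; norm_num
    have hne : ∀ i, i ≤ n + 1 → b i ≠ 0 := by
      intro i hi
      rcases Nat.eq_zero_or_pos i with rfl | h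
      · rw [hb0]; norm_num
      · exact hbne i h hi
    have hkey := key_lemma n b hne hbd
    rw [if_pos hb0pos] at hkey
    have hev := congrArg (Polynomial.eval (1:ℝ)) hkey
    simp only [Polynomial.eval_comp, Polynomial.eval_mul, Polynomial.eval_C,
      Polynomial.eval_X, mul_one] at hev
    have hgd : gd (n+1) b = (fdPoly n (fun i => b (i+2) / b (i+1))).eval (b 1 / b 0) := rfl
    rw [hgd, hev, sign_prod_Icc (n+1) b hbne]
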